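/- Let p be a prime, n ≥ 1, and let R be a commutative ring in which p^n = 0. Then there exists z ∈ W(R) with V(F(z)) = p^n in W(R) (where p^n denotes the image of the integer p^n in W(R)). Moreover, the set of all such z is a coset of ker(F): if z is a solution, then z' is a solution if and only if F(z − z') = 0. -/

import Mathlib

open WittVector Finset MvPolynomial

section dwork

private def dworkAux (p : ℕ) (y : ℕ → ℤ) : ℕ → ℤ
  | k =>
    (y k - ∑ i ∈ (Finset.range k).attach,
      (p : ℤ) ^ (i : ℕ) * dworkAux p y i ^ p ^ (k - (i : ℕ))) / (p : ℤ) ^ k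
decreasing_by exact Finset.mem_range.mp i.2

private lemma dworkAux_def (p : ℕ) (y : ℕ → ℤ) (k : ℕ) :
    dworkAux p y k =
      (y k - ∑ i ∈ Finset.range k, (p : ℤ) ^ i * dworkAux p y i ^ p ^ (k - i)) / (p : ℤ) ^ k := by
  conv_lhs => rw [dworkAux]
  rw [Finset.sum_attach (Finset.range k) (fun i => (p : ℤ) ^ i * dworkAux p y i ^ p ^ (k - i))]

variable {p : ℕ} [hp : Fact p.Prime]

private lemma fermat (c : ℤ) : (p : ℤ) ∣ c - c ^ p := by
  have : ((c - c ^ p : ℤ) : ZMod p) = 0 := by push_cast; rw [ZMod.pow_card]; ring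
  exact (ZMod.intCast_zmod_eq_zero_iff_dvd _ _).mp this

private lemma dwork_ghost (y : ℕ → ℤ) (hy : ∀ k, 0 < k → (p : ℤ) ^ k ∣ y k - y (k - 1)) :
    ∀ k, ∑ i ∈ range (k + 1), (p : ℤ) ^ i * dworkAux p y i ^ p ^ (k - i) = y k := by
  intro k
  induction k using Nat.strong_induction_on with
  | _ k IH =>
    have hdvd : (p : ℤ) ^ k ∣ y k - ∑ i ∈ range k, (p : ℤ) ^ i * dworkAux p y i ^ p ^ (k - i) := by
      rcases k with - | m
      · simpa using one_dvd _
      · have hIH := IH m (Nat.lt_succ_self m)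
        have step : y (m + 1) - ∑ i ∈ range (m + 1), (p : ℤ) ^ i * dworkAux p y i ^ p ^ (m + 1 - i) =
            (y (m + 1) - y m) +
            ∑ i ∈ range (m + 1),
              (p : ℤ) ^ i * (dworkAux p y i ^ p ^ (m - i) - dworkAux p y i ^ p ^ (m + 1 - i)) := by
          simp only [mul_sub, Finset.sum_sub_distrib, hIH]
          ring
        rw [step]
        refine dvd_add ?_ (Finset.dvd_sum ?_)
        · simpa using hy (m + 1) (Nat.succ_pos m)
        · intro i hi
          have him : i ≤ m := Nat.lt_succ_iff.mp (Finset.mem_range.mp hi)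
          set c : ℤ := dworkAux p y i with hc
          have h2 := dvd_sub_pow_of_dvd_sub (fermat (p := p) c) (m - i)
          have h3 : (c ^ p) ^ p ^ (m - i) = c ^ p ^ (m + 1 - i) := by
            rw [← pow_mul]
            congr 1
            rw [← pow_succ']
            congr 1
            omega
          rw [h3] at h2
          have h4 : (p : ℤ) ^ (m + 1) = (p : ℤ) ^ i * (p : ℤ) ^ (m - i + 1) := by
            rw [← pow_add]; congr 1; omega
          rw [h4]
          exact mul_dvd_mul_left _ h2
    rw [Finset.sum_range_succ]
    have : (p : ℤ) ^ k * dworkAux p y k =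
        y k - ∑ i ∈ range k, (p : ℤ) ^ i * dworkAux p y i ^ p ^ (k - i) := by
      rw [dworkAux_def]
      exact Int.mul_ediv_cancel' hdvd
    simp only [Nat.sub_self, pow_zero, pow_one]
    rw [this]
    ring

private lemma ghost_eq (x : WittVector p ℤ) (k : ℕ) :
    ghostComponent k x = ∑ i ∈ range (k + 1), (p : ℤ) ^ i * x.coeff i ^ p ^ (k - i) := by
  rw [ghostComponent_apply, aeval_wittPolynomial]

/-- Dwork-style existence: a sequence satisfying the congruences is a ghost sequence. -/
private lemma exists_ghost (y : ℕ → ℤ) (hy : ∀ k, 0 < k → (p : ℤ) ^ k ∣ y k - y (k - 1)) :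
    ∃ x : WittVector p ℤ, ∀ k, ghostComponent k x = y k := by
  refine ⟨WittVector.mk p (dworkAux p y), fun k => ?_⟩
  rw [ghost_eq]
  simpa [WittVector.coeff_mk] using dwork_ghost y hy k

end dwork

section main

variable {p : ℕ} [hp : Fact p.Prime]

private lemma ghost_nat (R : Type*) [CommRing R] (f : ℤ →+* R) (x : WittVector p ℤ) (k : ℕ) :
    ghostComponent k (WittVector.map f x) = f (ghostComponent k x) := by
  rw [ghostComponent_apply, ghostComponent_apply, map_aeval, aeval_eq_eval₂Hom]
  apply eval₂Hom_congr (RingHom.ext_int _ _) (funext fun n => WittVector.map_coeff f x n) rfl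

private lemma ghost_inj (x y : WittVector p ℤ)
    (h : ∀ k, ghostComponent k x = ghostComponent k y) : x = y := by
  apply WittVector.map_injective (Int.castRingHom ℚ) Int.cast_injective
  haveI : Invertible (p : ℚ) := invertibleOfNonzero (by
    exact_mod_cast hp.out.ne_zero)
  apply (WittVector.ghostEquiv p ℚ).injective
  show ghostMap _ = ghostMap _
  funext k
  simp only [ghostMap_apply, ghost_nat, h]

private lemma map_frob (R : Type*) [CommRing R] (f : ℤ →+* R) (x : WittVector p ℤ) :
    WittVector.map f (frobenius x) = frobenius (WittVector.map f x) := by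
  ext k
  simp only [WittVector.map_coeff, coeff_frobenius, map_aeval]
  apply eval₂Hom_congr (RingHom.ext_int _ _) rfl rfl

private lemma exists_d (n : ℕ) (hn : 1 ≤ n) :
    ∃ d : WittVector p ℤ,
      verschiebung d = ((p ^ n : ℕ) : WittVector p ℤ) - teichmuller p ((p : ℤ) ^ n) ∧
      ∀ k, ghostComponent k d = (p : ℤ) ^ (n - 1) - (p : ℤ) ^ (n * p ^ (k + 1) - 1) := by
  have hp1 : 1 < p := hp.out.one_lt
  have hyd : ∀ k, 0 < k → (p : ℤ) ^ k ∣
      ((p : ℤ) ^ (n - 1) - (p : ℤ) ^ (n * p ^ (k + 1) - 1)) -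
        ((p : ℤ) ^ (n - 1) - (p : ℤ) ^ (n * p ^ (k - 1 + 1) - 1)) := by
    rintro (_ | m) hk
    · omega
    · simp only [Nat.add_sub_cancel]
      have hA : m + 2 ≤ n * p ^ (m + 1) :=
        le_trans ((Nat.lt_pow_self hp1 : m + 1 < p ^ (m + 1))) (Nat.le_mul_of_pos_left _ (by omega))
      have hB : m + 2 ≤ n * p ^ (m + 2) :=
        le_trans (Nat.le_of_lt ((Nat.lt_pow_self hp1 : m + 2 < p ^ (m + 2))))
          (Nat.le_mul_of_pos_left _ (by omega))
      show (p : ℤ) ^ (m + 1) ∣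
        ((p : ℤ) ^ (n - 1) - (p : ℤ) ^ (n * p ^ (m + 2) - 1)) -
          ((p : ℤ) ^ (n - 1) - (p : ℤ) ^ (n * p ^ (m + 1) - 1))
      have heq : ((p : ℤ) ^ (n - 1) - (p : ℤ) ^ (n * p ^ (m + 2) - 1)) -
          ((p : ℤ) ^ (n - 1) - (p : ℤ) ^ (n * p ^ (m + 1) - 1)) =
          (p : ℤ) ^ (n * p ^ (m + 1) - 1) - (p : ℤ) ^ (n * p ^ (m + 2) - 1) := by ring
      rw [heq]
      exact dvd_sub (pow_dvd_pow _ (by omega)) (pow_dvd_pow _ (by omega))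
  obtain ⟨d, hd⟩ := exists_ghost (p := p)
    (fun k => (p : ℤ) ^ (n - 1) - (p : ℤ) ^ (n * p ^ (k + 1) - 1)) hyd
  refine ⟨d, ghost_inj _ _ fun k => ?_, hd⟩
  rcases k with - | k
  · rw [ghostComponent_zero_verschiebung, map_sub, map_natCast, ghostComponent_teichmuller]
    push_cast
    ring
  · rw [ghostComponent_verschiebung, hd, map_sub, map_natCast, ghostComponent_teichmuller,
      ← pow_mul]
    have hE : 1 ≤ n * p ^ (k + 1) := Nat.one_le_iff_ne_zero.mpr (by positivity)
    have h1 : (p : ℤ) * (p : ℤ) ^ (n - 1) = (p : ℤ) ^ n := by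
      rw [← pow_succ']; congr 1; omega
    have h2 : (p : ℤ) * (p : ℤ) ^ (n * p ^ (k + 1) - 1) = (p : ℤ) ^ (n * p ^ (k + 1)) := by
      rw [← pow_succ']; congr 1; omega
    rw [mul_sub, h1, h2]
    push_cast
    ring

private lemma exists_e (n : ℕ) (hn : 2 ≤ n) (d : WittVector p ℤ)
    (hd : ∀ k, ghostComponent k d = (p : ℤ) ^ (n - 1) - (p : ℤ) ^ (n * p ^ (k + 1) - 1)) :
    ∃ e : WittVector p ℤ, e * (p : WittVector p ℤ) = d := by
  have hp1 : 1 < p := hp.out.one_lt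
  have hye : ∀ k, 0 < k → (p : ℤ) ^ k ∣
      ((p : ℤ) ^ (n - 2) - (p : ℤ) ^ (n * p ^ (k + 1) - 2)) -
        ((p : ℤ) ^ (n - 2) - (p : ℤ) ^ (n * p ^ (k - 1 + 1) - 2)) := by
    rintro (_ | m) hk
    · omega
    · simp only [Nat.add_sub_cancel]
      have hA : m + 3 ≤ n * p ^ (m + 1) := by
        have h1 : m + 2 ≤ p ^ (m + 1) := (Nat.lt_pow_self hp1 : m + 1 < p ^ (m + 1))
        have h2 : 2 * p ^ (m + 1) ≤ n * p ^ (m + 1) :=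
          Nat.mul_le_mul_right _ hn
        omega
      have hB : m + 3 ≤ n * p ^ (m + 2) := by
        have h1 : m + 3 ≤ p ^ (m + 2) := (Nat.lt_pow_self hp1 : m + 2 < p ^ (m + 2))
        have h2 : p ^ (m + 2) ≤ n * p ^ (m + 2) := Nat.le_mul_of_pos_left _ (by omega)
        omega
      show (p : ℤ) ^ (m + 1) ∣
        ((p : ℤ) ^ (n - 2) - (p : ℤ) ^ (n * p ^ (m + 2) - 2)) -
          ((p : ℤ) ^ (n - 2) - (p : ℤ) ^ (n * p ^ (m + 1) - 2))
      have heq : ((p : ℤ) ^ (n - 2) - (p : ℤ) ^ (n * p ^ (m + 2) - 2)) -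
          ((p : ℤ) ^ (n - 2) - (p : ℤ) ^ (n * p ^ (m + 1) - 2)) =
          (p : ℤ) ^ (n * p ^ (m + 1) - 2) - (p : ℤ) ^ (n * p ^ (m + 2) - 2) := by ring
      rw [heq]
      exact dvd_sub (pow_dvd_pow _ (by omega)) (pow_dvd_pow _ (by omega))
  obtain ⟨e, he⟩ := exists_ghost (p := p)
    (fun k => (p : ℤ) ^ (n - 2) - (p : ℤ) ^ (n * p ^ (k + 1) - 2)) hye
  refine ⟨e, ghost_inj _ _ fun k => ?_⟩
  rw [map_mul, map_natCast, he, hd]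
  have hE : 2 ≤ n * p ^ (k + 1) :=
    le_trans hn (Nat.le_mul_of_pos_right _ (by positivity))
  have h1 : (p : ℤ) ^ (n - 2) * p = (p : ℤ) ^ (n - 1) := by
    rw [← pow_succ]; congr 1; omega
  have h2 : (p : ℤ) ^ (n * p ^ (k + 1) - 2) * p = (p : ℤ) ^ (n * p ^ (k + 1) - 1) := by
    rw [← pow_succ]; congr 1; omega
  rw [sub_mul, h1, h2]

end main

/-- Let `p` be a prime, `n ≥ 1`, and let `R` be a commutative ring with `p^n = 0` in `R`.
Then there exists `z ∈ W(R)` with `V(F(z)) = p^n` in `W(R)`. Moreover the set of all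
such `z` is a coset of `ker F`: if `z` is a solution, then `z'` is a solution if and
only if `F(z − z') = 0`. -/
theorem stmt7 (p : ℕ) [Fact p.Prime] (n : ℕ) (hn : 1 ≤ n)
    (R : Type*) [CommRing R] (hR : ((p ^ n : ℕ) : R) = 0) :
    (∃ z : WittVector p R,
      verschiebung (frobenius z) = ((p ^ n : ℕ) : WittVector p R)) ∧
    (∀ z : WittVector p R,
      verschiebung (frobenius z) = ((p ^ n : ℕ) : WittVector p R) →
      ∀ z' : WittVector p R,
        (verschiebung (frobenius z') = ((p ^ n : ℕ) : WittVector p R) ↔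
          frobenius (z - z') = 0)) := by
  constructor
  · -- existence
    rcases subsingleton_or_nontrivial R with hS | hS
    · haveI : Subsingleton (WittVector p R) :=
        ⟨fun a b => by ext k; exact Subsingleton.elim _ _⟩
      exact ⟨0, Subsingleton.elim _ _⟩
    obtain ⟨d, hd1, hd2⟩ := exists_d (p := p) n hn
    set g : ℤ →+* R := Int.castRingHom R with hg
    have hpn0 : g ((p : ℤ) ^ n) = 0 := by
      have : ((p : R)) ^ n = 0 := by exact_mod_cast hR
      simpa [hg] using this
    have hmapVd : WittVector.map g (verschiebung d) = ((p ^ n : ℕ) : WittVector p R) := by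
      rw [hd1, map_sub, map_natCast, WittVector.map_teichmuller, hpn0, teichmuller_zero,
        sub_zero]
    rcases lt_or_ge n 2 with h2 | h2
    · -- n = 1 : characteristic p
      have hn1 : n = 1 := by omega
      have hpR : (p : R) = 0 := by
        subst hn1
        simpa using hR
      haveI : CharP R p := (CharP.charP_iff_prime_eq_zero Fact.out).mpr hpR
      refine ⟨WittVector.map g d, ?_⟩
      have hFz : frobenius (WittVector.map g d) = WittVector.map g d := by
        ext k
        rw [coeff_frobenius_charP, WittVector.map_coeff]
        obtain ⟨t, ht⟩ := fermat (p := p) (d.coeff k)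
        have hc : d.coeff k ^ p = d.coeff k - (p : ℤ) * t := by linarith
        rw [← map_pow, hc, map_sub, map_mul]
        have hgp : g (p : ℤ) = 0 := by simpa [hg] using hpR
        rw [hgp, zero_mul, sub_zero]
      rw [hFz, ← WittVector.map_verschiebung, hmapVd]
    · -- n ≥ 2
      obtain ⟨e, he⟩ := exists_e (p := p) n h2 d hd2
      refine ⟨WittVector.map g (verschiebung e), ?_⟩
      rw [← map_frob R g, frobenius_verschiebung, he, ← WittVector.map_verschiebung,
        hmapVd]
  · -- coset of ker F
    have hVinj : Function.Injective (verschiebung : WittVector p R → WittVector p R) := by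
      intro a b h
      ext k
      have := congrArg (fun w => WittVector.coeff w (k + 1)) h
      simpa [WittVector.verschiebung_coeff_succ] using this
    intro z hz z'
    constructor
    · intro hz'
      have h := hVinj (hz'.trans hz.symm)
      rw [map_sub, h, sub_self]
    · intro h0
      rw [map_sub] at h0
      have h := sub_eq_zero.mp h0
      rw [← h, hz]
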